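/- There are no bands on (Q(n), I(n)) for any n ≥ 1. More precisely, no nontrivial reduced cycle w on Q(n) has the property that w^h is a string on (Q(n), I(n)) for all h ≥ 1. -/

import Mathlib

/-!  Combinatorics of walks and strings on the quiver `Q(n)` with relations `I(n)`.

`Q(n)` has vertices `0,…,n` and arrows `α i : i+1 → i` and `β i : i → i+1`
for `0 ≤ i ≤ n-1`.  A letter is an arrow or a formal inverse of an arrow. -/

/-- A letter of a walk on `Q(n)`: an arrow `α i` or `β i`, or a formal
inverse `α i *` (`ia i`) or `β i *` (`ib i`). -/
inductive Letter where
  | a (i : ℕ)   -- the arrow `α i : i+1 → i`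
  | b (i : ℕ)   -- the arrow `β i : i → i+1`
  | ia (i : ℕ)  -- the formal inverse of `α i`
  | ib (i : ℕ)  -- the formal inverse of `β i`
  deriving DecidableEq

namespace Letter

/-- The `*`-operation on letters (formal inversion). -/
def star : Letter → Letter
  | a i => ia i
  | ia i => a i
  | b i => ib i
  | ib i => b i

/-- Source of a letter. -/
def src : Letter → ℕ
  | a i => i + 1
  | ia i => i
  | b i => i
  | ib i => i + 1

/-- Target of a letter. -/
def tgt : Letter → ℕ
  | a i => i
  | ia i => i + 1
  | b i => i + 1
  | ib i => i

/-- Whether a letter is an honest arrow of `Q(n)` (not a formal inverse). -/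
def honest : Letter → Bool
  | a _ => true
  | b _ => true
  | ia _ => false
  | ib _ => false

/-- Whether a letter is a letter of the quiver `Q(n)` (arrows `α i, β i` only
exist for `i < n`). -/
def valid (n : ℕ) : Letter → Prop
  | a i => i < n
  | b i => i < n
  | ia i => i < n
  | ib i => i < n

end Letter

open Letter

/-- A walk `γ₁γ₂…γₘ` on `Q(n)`, encoded as the list `[γ₁, …, γₘ]`:
all letters exist in `Q(n)` and `t (γ_{k+1}) = s (γ_k)` for consecutive letters. -/
def IsWalk (n : ℕ) (w : List Letter) : Prop :=
  (∀ c ∈ w, c.valid n) ∧ w.Chain' (fun c d => d.tgt = c.src)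

/-- A walk is reduced if no letter is immediately followed by its formal inverse:
`γ_k ≠ γ_{k+1}*`. -/
def IsReducedWalk (w : List Letter) : Prop :=
  w.Chain' (fun c d => c ≠ d.star)

/-- The formal inverse `w* = γₘ* … γ₁*` of a walk `w = γ₁…γₘ`. -/
def starWalk (w : List Letter) : List Letter :=
  (w.map Letter.star).reverse

/-- The source `s(w) = s(γₘ)` of a (nonempty) walk. -/
def walkSrc (w : List Letter) : ℕ := (w.getLastD (Letter.a 0)).src

/-- The function `f_w : {0,…,m} → {0,…,n}` attached to a walk `w = γ₁…γₘ`: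
`f_w 0 = s(γₘ)` and `f_w j = t(γ_{m-j+1})` for `1 ≤ j ≤ m`. -/
def fW (w : List Letter) (j : ℕ) : ℕ :=
  if j = 0 then (w.getLastD (Letter.a 0)).src
  else ((w.getD (w.length - j) (Letter.a 0))).tgt

/-- The target `t(w) = t(γ₁)` of a (nonempty) walk. -/
def walkTgt (w : List Letter) : ℕ := fW w w.length

/-- The length-two paths which are monomials appearing in the generators of the
ideal `I(n)`: `α i · α (i+1)`, `β (i+1) · β i`, `α j · β j` (coming from `α 0 β 0`
and from the binomial relations `β i α i - α (i+1) β (i+1)`, `0 ≤ i ≤ n-2`), and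
`β i · α i` for `0 ≤ i ≤ n-2`.  A pair `(x, y)` stands for the path `x y`
(first traverse `y`, then `x`). -/
def ForbiddenPair (n : ℕ) (x y : Letter) : Prop :=
  (∃ i, x = Letter.a i ∧ y = Letter.a (i + 1)) ∨
  (∃ i, x = Letter.b (i + 1) ∧ y = Letter.b i) ∨
  (∃ j, x = Letter.a j ∧ y = Letter.b j) ∨
  (∃ i, i + 2 ≤ n ∧ x = Letter.b i ∧ y = Letter.a i)

/-- A string on `(Q(n), I(n))`: a reduced walk such that no path contained in it
(i.e. no contiguous subword of `w` consisting of honest arrows, and no formal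
inverse of such a subword) is a monomial appearing in a generator of `I(n)`.
Since all monomials appearing in the generators of `I(n)` have length two, this
amounts to forbidding the pairs of `ForbiddenPair` in both orientations. -/
def IsString (n : ℕ) (w : List Letter) : Prop :=
  IsWalk n w ∧ IsReducedWalk w ∧
    ∀ x y : Letter, [x, y] <:+: w →
      ¬ ForbiddenPair n x y ∧ ¬ ForbiddenPair n y.star x.star

/-- An alternating walk: `γ_k` is an honest arrow iff `γ_{k+1}` is a formal
inverse, for all `k < m`. -/
def IsAlternating (w : List Letter) : Prop :=
  w.Chain' (fun c d => c.honest = !d.honest)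

/-- A path on `Q(n)`: a walk all of whose letters are honest arrows. -/
def IsPath (n : ℕ) (p : List Letter) : Prop :=
  IsWalk n p ∧ ∀ c ∈ p, c.honest = true

/-- The `h`-fold concatenation `w^h` of a walk with itself. -/
def powWalk (w : List Letter) (h : ℕ) : List Letter :=
  (List.replicate h w).flatten

/-- Direction of traversal of a letter: `true` if the vertex index goes up. -/
def dirUp : Letter → Bool
  | .a _ => false
  | .ia _ => true
  | .b _ => true
  | .ib _ => false

lemma up_tgt {c : Letter} (h : dirUp c = true) : c.tgt = c.src + 1 := by
  cases c <;> simp_all [dirUp, Letter.tgt, Letter.src]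

lemma down_src {c : Letter} (h : dirUp c = false) : c.src = c.tgt + 1 := by
  cases c <;> simp_all [dirUp, Letter.tgt, Letter.src]

/-- Key pair analysis: along a string (read as a list), the direction can only
drop from `true` to `false`, never rise. -/
lemma pair_lemma (n : ℕ) (x y : Letter) (hw : y.tgt = x.src) (hr : x ≠ y.star)
    (hf1 : ¬ ForbiddenPair n x y) (hf2 : ¬ ForbiddenPair n y.star x.star) :
    dirUp y = true → dirUp x = true := by
  intro hy
  cases x with
  | b i => rfl
  | ia i => rfl
  | a i =>
    exfalso
    cases y with
    | a j => simp [dirUp] at hy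
    | ib j => simp [dirUp] at hy
    | b j =>
      simp only [Letter.tgt, Letter.src] at hw
      obtain rfl : j = i := by omega
      exact hf1 (Or.inr (Or.inr (Or.inl ⟨_, rfl, rfl⟩)))
    | ia j =>
      simp only [Letter.tgt, Letter.src] at hw
      obtain rfl : j = i := by omega
      exact hr rfl
  | ib i =>
    exfalso
    cases y with
    | a j => simp [dirUp] at hy
    | ib j => simp [dirUp] at hy
    | b j =>
      simp only [Letter.tgt, Letter.src] at hw
      obtain rfl : j = i := by omega
      exact hr rfl
    | ia j =>
      simp only [Letter.tgt, Letter.src] at hw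
      obtain rfl : j = i := by omega
      exact hf2 (Or.inr (Or.inr (Or.inl ⟨_, rfl, rfl⟩)))

/-- Combine two `Chain'` statements. -/
lemma chain'_and {α : Type*} {R S : α → α → Prop} :
    ∀ l : List α, l.Chain' R → l.Chain' S → l.Chain' (fun a b => R a b ∧ S a b)
  | [], _, _ => List.isChain_nil
  | [_], _, _ => List.isChain_singleton _
  | p :: q :: ts, h1, h2 => by
    unfold List.Chain' at h1 h2 ⊢
    rw [List.isChain_cons_cons] at h1 h2 ⊢
    exact ⟨⟨h1.1, h2.1⟩, chain'_and (q :: ts) h1.2 h2.2⟩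

/-- A chain obtained from a condition on all length-two infixes. -/
lemma chain'_of_infix {Q : Letter → Letter → Prop} :
    ∀ l : List Letter, (∀ x y : Letter, [x, y] <:+: l → Q x y) → l.Chain' Q
  | [], _ => List.isChain_nil
  | [_], _ => List.isChain_singleton _
  | p :: q :: ts, h => by
    unfold List.Chain'
    rw [List.isChain_cons_cons]
    refine ⟨h p q ⟨[], ts, rfl⟩, chain'_of_infix (q :: ts) ?_⟩
    intro x y hxy
    exact h x y (hxy.trans (List.suffix_cons p (q :: ts)).isInfix)

abbrev DirChain (l : List Letter) : Prop :=
  l.Chain' (fun c d => dirUp d = true → dirUp c = true)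

/-- If the last letter goes up, all letters go up. -/
lemma all_up : ∀ l : List Letter, DirChain l →
    dirUp (l.getLastD (.a 0)) = true → ∀ c ∈ l, dirUp c = true
  | [], _, _ => by simp
  | [p], _, h => by simpa using h
  | p :: q :: ts, hc, h => by
    obtain ⟨hc1, hc2⟩ := List.isChain_cons_cons.mp hc
    have hbt : ∀ c ∈ q :: ts, dirUp c = true :=
      all_up (q :: ts) hc2 (by simpa [List.getLastD_cons] using h)
    intro c hc'
    rcases List.mem_cons.mp hc' with rfl | hm
    · exact hc1 (hbt q (by simp))
    · exact hbt c hm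

/-- An up letter anywhere propagates to the head. -/
lemma to_head : ∀ l : List Letter, DirChain l →
    ∀ c ∈ l, dirUp c = true → dirUp (l.headD (.a 0)) = true
  | [], _, c, hc, _ => by simp at hc
  | [p], _, c, hc, h => by simp at hc; subst hc; simpa using h
  | p :: q :: ts, hch, c, hc, h => by
    obtain ⟨hch1, hch2⟩ := List.isChain_cons_cons.mp hch
    rcases List.mem_cons.mp hc with rfl | hm
    · simpa using h
    · exact hch1 (to_head (q :: ts) hch2 c hm h)

abbrev WalkChain (l : List Letter) : Prop :=
  l.Chain' (fun c d => d.tgt = c.src)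

/-- Displacement of an all-up walk. -/
lemma up_disp : ∀ (a : Letter) (t : List Letter), WalkChain (a :: t) →
    (∀ c ∈ a :: t, dirUp c = true) →
    a.tgt = ((a :: t).getLastD (.a 0)).src + (t.length + 1)
  | p, [], _, h => by simpa using up_tgt (h p (by simp))
  | p, q :: ts, hc, h => by
    obtain ⟨hc1, hc2⟩ := List.isChain_cons_cons.mp hc
    have ih := up_disp q ts hc2 (fun c hc' => h c (by simp [hc']))
    have ha := up_tgt (h p (by simp))
    simp only [List.getLastD_cons, List.length_cons] at ih ⊢
    omega

/-- Displacement of an all-down walk. -/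
lemma down_disp : ∀ (a : Letter) (t : List Letter), WalkChain (a :: t) →
    (∀ c ∈ a :: t, dirUp c = false) →
    ((a :: t).getLastD (.a 0)).src = a.tgt + (t.length + 1)
  | p, [], _, h => by simpa using down_src (h p (by simp))
  | p, q :: ts, hc, h => by
    obtain ⟨hc1, hc2⟩ := List.isChain_cons_cons.mp hc
    have ih := down_disp q ts hc2 (fun c hc' => h c (by simp [hc']))
    have ha := down_src (h p (by simp))
    simp only [List.getLastD_cons, List.length_cons] at ih ⊢
    omega

lemma dropLast_getLastD : ∀ (a : Letter) (t : List Letter),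
    (a :: t).dropLast ++ [(a :: t).getLastD (.a 0)] = a :: t
  | _, [] => rfl
  | p, q :: ts => by
    have := dropLast_getLastD q ts
    simp only [List.getLastD_cons, List.dropLast_cons₂, List.cons_append] at this ⊢
    exact congrArg (p :: ·) this

/-- there are no bands on `(Q(n), I(n))` for any `n ≥ 1`.  More
precisely, no nontrivial reduced cycle `w` (a walk of positive length with
`s(w) = t(w)`, cyclically reduced) has the property that `w^h` is a string on
`(Q(n), I(n))` for all `h ≥ 1`. -/
theorem stmt_5 (n : ℕ) (hn : 1 ≤ n) :
    ¬ ∃ w : List Letter, w ≠ [] ∧ IsWalk n w ∧ walkSrc w = walkTgt w ∧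
      IsReducedWalk w ∧ w.getLast? ≠ w.head?.map Letter.star ∧
      ∀ h : ℕ, 1 ≤ h → IsString n (powWalk w h) := by
  rintro ⟨w, hne, ⟨-, hchain⟩, hcyc, hred, hwrap, hstr⟩
  obtain ⟨a, t, rfl⟩ := List.exists_cons_of_ne_nil hne
  set w := a :: t with hw
  -- the string condition for w^2 = w ++ w
  have hpow : powWalk w 2 = w ++ w := by
    simp [powWalk, List.replicate]
  obtain ⟨-, -, hforb⟩ := hstr 2 (by norm_num)
  rw [hpow] at hforb
  -- notation for head and last
  set z := w.getLastD (.a 0) with hz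
  have hdz : w.dropLast ++ [z] = w := dropLast_getLastD a t
  -- source/target bookkeeping
  have hsrc : walkSrc w = z.src := rfl
  have htgt : walkTgt w = a.tgt := by
    have hlen : w.length ≠ 0 := by simp [hw]
    simp only [walkTgt, fW, hlen, if_neg hlen, Nat.sub_self]
    rfl
  -- the wrap pair [z, a] is an infix of w ++ w
  have hwrapinf : [z, a] <:+: w ++ w := by
    refine ⟨w.dropLast, t, ?_⟩
    calc w.dropLast ++ [z, a] ++ t = (w.dropLast ++ [z]) ++ (a :: t) := by
          simp
      _ = w ++ w := by rw [hdz]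
  have hwrapforb := hforb z a hwrapinf
  -- wrap pair is reduced
  have hwrapred : z ≠ a.star := by
    intro h
    apply hwrap
    have h1 : w.getLast? = some z := by
      rw [← hdz]
      simp [List.getLast?_append]
    rw [h1, h]
    rfl
  -- wrap pair satisfies the walk condition
  have hwrapwalk : a.tgt = z.src := by rw [← htgt, ← hsrc, hcyc]
  have hwrapdir : dirUp a = true → dirUp z = true :=
    pair_lemma n z a hwrapwalk hwrapred hwrapforb.1 hwrapforb.2
  -- the direction chain on w
  have hforbw : ∀ x y : Letter, [x, y] <:+: w → ¬ ForbiddenPair n x y ∧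
      ¬ ForbiddenPair n y.star x.star := fun x y hxy =>
    hforb x y (hxy.trans (List.prefix_append w w).isInfix)
  have hFchain : w.Chain' (fun x y => ¬ ForbiddenPair n x y ∧
      ¬ ForbiddenPair n y.star x.star) := chain'_of_infix w hforbw
  have hdir : DirChain w := by
    have h1 := chain'_and w hchain hred
    have h2 := chain'_and w h1 hFchain
    exact h2.imp (fun x y hxy =>
      pair_lemma n x y hxy.1.1 hxy.1.2 hxy.2.1 hxy.2.2)
  -- case on the direction of the last letter
  cases hzd : dirUp z with
  | true =>
    have hall : ∀ c ∈ w, dirUp c = true := all_up w hdir (hz ▸ hzd)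
    have := up_disp a t hchain hall
    rw [← hz, ← hwrapwalk] at this
    omega
  | false =>
    have hall : ∀ c ∈ w, dirUp c = false := by
      intro c hc
      by_contra hcu
      have hcu : dirUp c = true := by
        cases h : dirUp c
        · exact absurd h hcu
        · rfl
      have hhead : dirUp (w.headD (.a 0)) = true := to_head w hdir c hc hcu
      have : dirUp a = true := by simpa [hw] using hhead
      rw [hwrapdir this] at hzd
      simp at hzd
    have := down_disp a t hchain hall
    rw [← hz, ← hwrapwalk] at this
    omega
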